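/- Let a reaction network be given by α, β ∈ ℕ^{n×ν} with Γ = β − α and r = rank Γ, and let 𝒦 be its admissible Jacobian set. Assume the network is robustly P0. If there exists V* ∈ 𝒦 such that the sum of all r×r principal minors of −ΓV* is strictly positive, then for every V ∈ 𝒦 the sum of all r×r principal minors of −ΓV is strictly positive. -/

import Mathlib

open Matrix Finset

/-- The principal minor of a square matrix `M` indexed by the set `I`. -/
noncomputable def principalMinor {n : ℕ} (M : Matrix (Fin n) (Fin n) ℝ) (I : Finset (Fin n)) : ℝ :=
  (M.submatrix (fun i : {x // x ∈ I} => (i : Fin n)) (fun i : {x // x ∈ I} => (i : Fin n))).det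

/-- The sum of all `r × r` principal minors of the square matrix `M`. -/
noncomputable def sumMinors {n : ℕ} (r : ℕ) (M : Matrix (Fin n) (Fin n) ℝ) : ℝ :=
  ∑ I ∈ Finset.univ.powersetCard r, principalMinor M I

/-- The admissible Jacobian set: `V j i > 0` whenever `X i` is a reactant of reaction `j`
    (i.e. `α i j > 0`) and `V j i = 0` otherwise. -/
def admissible {n ν : ℕ} (α : Matrix (Fin n) (Fin ν) ℕ) (V : Matrix (Fin ν) (Fin n) ℝ) : Prop :=
  ∀ i j, (0 < α i j → 0 < V j i) ∧ (α i j = 0 → V j i = 0)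

/-- The stoichiometry matrix `Γ = β - α` (entries cast to `ℝ`). -/
def gam {n ν : ℕ} (α β : Matrix (Fin n) (Fin ν) ℕ) : Matrix (Fin n) (Fin ν) ℝ :=
  fun i j => (β i j : ℝ) - (α i j : ℝ)

def updEntry {n ν : ℕ} (W : Matrix (Fin ν) (Fin n) ℝ) (j : Fin ν) (i : Fin n) (s : ℝ) :
    Matrix (Fin ν) (Fin n) ℝ := fun j' i' => if j' = j ∧ i' = i then s else W j' i'

lemma minor_affine {n : ℕ} (C D : Matrix (Fin n) (Fin n) ℝ) (i : Fin n)
    (hD : ∀ i' c, c ≠ i → D i' c = 0) (I : Finset (Fin n)) :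
    ∃ a b : ℝ, ∀ s : ℝ, principalMinor (C + s • D) I = a + b * s := by
  classical
  by_cases hi : i ∈ I
  · set f : {x // x ∈ I} → Fin n := fun x => (x : Fin n) with hf
    set k : {x // x ∈ I} := ⟨i, hi⟩ with hk
    refine ⟨((C.submatrix f f).updateCol k fun x => C (f x) i).det,
            ((C.submatrix f f).updateCol k fun x => D (f x) i).det, ?_⟩
    intro s
    have key : (C + s • D).submatrix f f
        = (C.submatrix f f).updateCol k (fun x => C (f x) i + s * D (f x) i) := by
      ext x c
      by_cases hc : c = k
      · subst hc
        simp [Matrix.updateCol_apply, f, k]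
      · have hci : (c : Fin n) ≠ i := by
          intro h; exact hc (Subtype.ext h)
        simp [Matrix.updateCol_apply, hc, hD _ _ hci, f]
    have hfun : (fun x => C (f x) i + s * D (f x) i)
        = (fun x => C (f x) i) + s • (fun x => D (f x) i) := by
      funext x; simp
    show ((C + s • D).submatrix f f).det = _
    rw [key, hfun, Matrix.det_updateCol_add, Matrix.det_updateCol_smul]
    ring
  · refine ⟨principalMinor C I, 0, ?_⟩
    intro s
    have key : (C + s • D).submatrix (fun x : {x // x ∈ I} => (x : Fin n))
        (fun x : {x // x ∈ I} => (x : Fin n))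
        = C.submatrix (fun x : {x // x ∈ I} => (x : Fin n)) (fun x : {x // x ∈ I} => (x : Fin n)) := by
      ext x c
      have hci : (c : Fin n) ≠ i := fun h => hi (h ▸ c.2)
      simp [hD _ _ hci]
    unfold principalMinor
    rw [key]; ring

lemma sumMinors_affine {n : ℕ} (r : ℕ) (C D : Matrix (Fin n) (Fin n) ℝ) (i : Fin n)
    (hD : ∀ i' c, c ≠ i → D i' c = 0) :
    ∃ a b : ℝ, ∀ s : ℝ, sumMinors r (C + s • D) = a + b * s := by
  choose a b hab using fun I => minor_affine C D i hD I
  refine ⟨∑ I ∈ Finset.univ.powersetCard r, a I, ∑ I ∈ Finset.univ.powersetCard r, b I, ?_⟩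
  intro s
  unfold sumMinors
  simp only [hab]
  rw [Finset.sum_add_distrib, ← Finset.sum_mul]

lemma q_affine {n ν : ℕ} (α β : Matrix (Fin n) (Fin ν) ℕ) (r : ℕ)
    (W : Matrix (Fin ν) (Fin n) ℝ) (j : Fin ν) (i : Fin n) :
    ∃ a b : ℝ, ∀ s : ℝ,
      sumMinors r (-(gam α β * updEntry W j i s)) = a + b * s := by
  classical
  set E : Matrix (Fin ν) (Fin n) ℝ := fun j' i' => if j' = j ∧ i' = i then 1 else 0 with hE
  have hdec : ∀ s : ℝ, -(gam α β * updEntry W j i s)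
      = -(gam α β * updEntry W j i 0) + s • (-(gam α β * E)) := by
    intro s
    have h1 : updEntry W j i s = updEntry W j i 0 + s • E := by
      funext j' i'
      by_cases h : j' = j ∧ i' = i <;> simp [updEntry, h, Matrix.smul_apply] <;> simp [E, h]
    rw [h1, Matrix.mul_add, Matrix.mul_smul, neg_add, ← smul_neg]
  have hDcol : ∀ i' c, c ≠ i → (-(gam α β * E)) i' c = 0 := by
    intro i' c hc
    simp only [Matrix.neg_apply, Matrix.mul_apply, neg_eq_zero]
    apply Finset.sum_eq_zero
    intro j' _
    simp [E, hc]
  obtain ⟨a, b, hab⟩ := sumMinors_affine r (-(gam α β * updEntry W j i 0)) (-(gam α β * E)) i hDcol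
  exact ⟨a, b, fun s => by rw [hdec s]; exact hab s⟩

lemma updEntry_admissible {n ν : ℕ} {α : Matrix (Fin n) (Fin ν) ℕ}
    {W : Matrix (Fin ν) (Fin n) ℝ} (hW : admissible α W) {j : Fin ν} {i : Fin n}
    (hα : 0 < α i j) {t : ℝ} (ht : 0 < t) : admissible α (updEntry W j i t) := by
  intro i' j'
  constructor <;> intro h
  · by_cases hc : j' = j ∧ i' = i
    · simpa [updEntry, hc] using ht
    · simpa [updEntry, hc] using (hW i' j').1 h
  · by_cases hc : j' = j ∧ i' = i
    · exfalso; obtain ⟨h1, h2⟩ := hc; subst h1; subst h2; omega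
    · simpa [updEntry, hc] using (hW i' j').2 h

lemma entry_zero {n ν : ℕ} (α β : Matrix (Fin n) (Fin ν) ℕ) (r : ℕ)
    (hP0 : ∀ V, admissible α V → ∀ I : Finset (Fin n),
      0 ≤ principalMinor (-(gam α β * V)) I)
    (W : Matrix (Fin ν) (Fin n) ℝ) (hW : admissible α W) (j : Fin ν) (i : Fin n)
    (hα : 0 < α i j) (t : ℝ) (ht : 0 < t)
    (h0 : sumMinors r (-(gam α β * W)) = 0) :
    sumMinors r (-(gam α β * updEntry W j i t)) = 0 := by
  obtain ⟨a, b, hab⟩ := q_affine α β r W j i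
  have hw : 0 < W j i := (hW i j).1 hα
  have hUw : updEntry W j i (W j i) = W := by
    funext j' i'
    by_cases hc : j' = j ∧ i' = i
    · obtain ⟨h1, h2⟩ := hc; subst h1; subst h2; simp [updEntry]
    · simp [updEntry, hc]
  have heq : a + b * W j i = 0 := by
    have := hab (W j i); rw [hUw] at this; linarith [this, h0]
  have hpos : ∀ s : ℝ, 0 < s → 0 ≤ a + b * s := by
    intro s hs
    rw [← hab s]
    exact by unfold sumMinors; exact Finset.sum_nonneg fun I _ => hP0 _ (updEntry_admissible hW hα hs) I
  have h1 := hpos (W j i / 2) (by linarith)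
  have h2 := hpos (2 * W j i) (by linarith)
  have hble : b * W j i ≤ 0 := by nlinarith
  have hbge : 0 ≤ b * W j i := by nlinarith
  have hb : b = 0 := by
    rcases mul_eq_zero.mp (le_antisymm hble hbge) with h | h
    · exact h
    · exact absurd h (ne_of_gt hw)
  rw [hab t, hb]
  nlinarith [heq]

/-- For a robustly `P₀` network, if the sum of all `r × r` principal minors of
`-Γ V*` is positive for one admissible `V*`, it is positive for all admissible `V`. -/
theorem one_point_nondegeneracy (n ν : ℕ) (α β : Matrix (Fin n) (Fin ν) ℕ) (r : ℕ)
    (hr : r = (gam α β).rank)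
    (hP0 : ∀ V, admissible α V → ∀ I : Finset (Fin n),
      0 ≤ principalMinor (-(gam α β * V)) I)
    (hexists : ∃ Vstar, admissible α Vstar ∧
      0 < sumMinors r (-(gam α β * Vstar))) :
    ∀ V, admissible α V → 0 < sumMinors r (-(gam α β * V)) := by
  classical
  obtain ⟨Vs, hVs, hVspos⟩ := hexists
  intro V hV
  by_contra hcon
  push_neg at hcon
  have hq0 : sumMinors r (-(gam α β * V)) = 0 := by
    have : 0 ≤ sumMinors r (-(gam α β * V)) :=
      by unfold sumMinors; exact Finset.sum_nonneg fun I _ => hP0 V hV I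
    linarith
  set hyb : Finset (Fin ν × Fin n) → Matrix (Fin ν) (Fin n) ℝ :=
    fun S => fun j i => if (j, i) ∈ S then Vs j i else V j i with hhyb
  have hyb_adm : ∀ S, admissible α (hyb S) := by
    intro S i j
    by_cases h : (j, i) ∈ S
    · exact ⟨fun hh => by simpa [hhyb, h] using (hVs i j).1 hh,
        fun hh => by simpa [hhyb, h] using (hVs i j).2 hh⟩
    · exact ⟨fun hh => by simpa [hhyb, h] using (hV i j).1 hh,
        fun hh => by simpa [hhyb, h] using (hV i j).2 hh⟩
  have key : ∀ S, sumMinors r (-(gam α β * hyb S)) = 0 := by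
    intro S
    induction S using Finset.induction_on with
    | empty =>
      have : hyb ∅ = V := by funext j' i'; simp [hhyb]
      rw [this]; exact hq0
    | @insert p S hp ih =>
      have hins : hyb (insert p S) = updEntry (hyb S) p.1 p.2 (Vs p.1 p.2) := by
        funext j' i'
        by_cases h : (j', i') = p
        · subst h
          simp [hhyb, updEntry]
        · have hne : ¬(j' = p.1 ∧ i' = p.2) := fun hh => h (Prod.ext hh.1 hh.2)
          simp only [hhyb, updEntry, Finset.mem_insert, if_neg hne]
          simp [h]
      rcases Nat.eq_zero_or_pos (α p.2 p.1) with h0 | hpos'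
      · have hvz : Vs p.1 p.2 = 0 := (hVs p.2 p.1).2 h0
        have hvz2 : V p.1 p.2 = 0 := (hV p.2 p.1).2 h0
        have hz : updEntry (hyb S) p.1 p.2 (Vs p.1 p.2) = hyb S := by
          funext j' i'
          by_cases hc : j' = p.1 ∧ i' = p.2
          · obtain ⟨h1, h2⟩ := hc
            simp only [updEntry, hhyb, h1, h2, hvz]
            simp [hvz, hvz2]
          · simp [updEntry, hc]
        rw [hins, hz]; exact ih
      · rw [hins]
        exact entry_zero α β r hP0 (hyb S) (hyb_adm S) p.1 p.2 hpos' _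
          ((hVs p.2 p.1).1 hpos') ih
  have huniv := key Finset.univ
  have : hyb Finset.univ = Vs := by funext j' i'; simp [hhyb]
  rw [this] at huniv
  linarith
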